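/- Let d ≥ 1 and let j : (0,∞) → [0,∞) be nonincreasing. For r₀ > 0 define m₂⟨r₀⟩ := ∫_{B(0,r₀)} |x|²·(j(|x|) − ½ j(r₀)) dx and λ⟨r₀⟩ := λ(r₀) + ½ j(r₀)·vol(B(0,r₀)). Then for every r₀ > 0: (i) ½·m₂(r₀) ≤ m₂⟨r₀⟩ ≤ m₂(r₀); (ii) λ⟨r₀⟩ ≥ λ(r₀); and (iii) if in addition there is c_j > 0 with j(2r) ≥ c_j·j(r) for all r > 0, then λ⟨r₀⟩ ≤ (1 + 1/(2(2^d−1)c_j))·λ(r₀), where all quantities are read in the extended nonnegative reals. -/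

import Mathlib

open MeasureTheory Metric ENNReal

/-- Truncated second moment `m₂(r) = ∫_{B(0,r)} |x|² j(|x|) dx` in `ℝ^d`. -/
noncomputable def m2 (d : ℕ) (j : ℝ → ℝ) (r : ℝ) : ℝ≥0∞ :=
  ∫⁻ x in Metric.ball (0 : EuclideanSpace ℝ (Fin d)) r,
    ENNReal.ofReal (‖x‖ ^ 2 * j ‖x‖)

/-- Tail `λ(r) = ∫_{ℝ^d ∖ B(0,r)} j(|x|) dx` in `ℝ^d`. -/
noncomputable def tailLam (d : ℕ) (j : ℝ → ℝ) (r : ℝ) : ℝ≥0∞ :=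
  ∫⁻ x in (Metric.ball (0 : EuclideanSpace ℝ (Fin d)) r)ᶜ,
    ENNReal.ofReal (j ‖x‖)

/-- Second moment of the small part of the small/flat decomposition:
`m₂⟨r₀⟩ = ∫_{B(0,r₀)} |x|²·(j(|x|) − ½ j(r₀)) dx`. -/
noncomputable def m2Flat (d : ℕ) (j : ℝ → ℝ) (r₀ : ℝ) : ℝ≥0∞ :=
  ∫⁻ x in Metric.ball (0 : EuclideanSpace ℝ (Fin d)) r₀,
    ENNReal.ofReal (‖x‖ ^ 2 * (j ‖x‖ - j r₀ / 2))

/-- Total mass of the flat part of the small/flat decomposition: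
`λ⟨r₀⟩ = λ(r₀) + ½ j(r₀)·vol(B(0,r₀))`. -/
noncomputable def lamFlat (d : ℕ) (j : ℝ → ℝ) (r₀ : ℝ) : ℝ≥0∞ :=
  tailLam d j r₀ +
    ENNReal.ofReal (j r₀ / 2) * volume (Metric.ball (0 : EuclideanSpace ℝ (Fin d)) r₀)

theorem stmt10 (d : ℕ) (hd : 1 ≤ d) (j : ℝ → ℝ)
    (hnonneg : ∀ r : ℝ, 0 < r → 0 ≤ j r)
    (hmono : AntitoneOn j (Set.Ioi (0 : ℝ)))
    (r₀ : ℝ) (hr₀ : 0 < r₀) :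
    (m2 d j r₀ / 2 ≤ m2Flat d j r₀ ∧ m2Flat d j r₀ ≤ m2 d j r₀) ∧
    tailLam d j r₀ ≤ lamFlat d j r₀ ∧
    (∀ cj : ℝ, 0 < cj → (∀ r : ℝ, 0 < r → cj * j r ≤ j (2 * r)) →
      lamFlat d j r₀ ≤
        ENNReal.ofReal (1 + 1 / (2 * ((2 : ℝ) ^ d - 1) * cj)) * tailLam d j r₀) := by
  have hjr₀ : 0 ≤ j r₀ := hnonneg r₀ hr₀
  haveI : Nontrivial (EuclideanSpace ℝ (Fin d)) := by
    have : NeZero d := ⟨by omega⟩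
    infer_instance
  refine ⟨⟨?_, ?_⟩, le_self_add, ?_⟩
  · -- m2 / 2 ≤ m2Flat
    refine ENNReal.div_le_of_le_mul ?_
    rw [m2, m2Flat, ← lintegral_mul_const' 2 _ (by norm_num)]
    refine setLIntegral_mono' measurableSet_ball fun x hx => ?_
    rw [mem_ball_zero_iff] at hx
    rcases eq_or_lt_of_le (norm_nonneg x) with h0 | h0
    · rw [← h0]; simp
    · have hj : j r₀ ≤ j ‖x‖ := hmono h0 (lt_trans h0 hx) hx.le
      have hh : 0 ≤ ‖x‖ ^ 2 * (j ‖x‖ - j r₀) :=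
        mul_nonneg (sq_nonneg _) (by linarith)
      calc ENNReal.ofReal (‖x‖ ^ 2 * j ‖x‖)
          ≤ ENNReal.ofReal (‖x‖ ^ 2 * (j ‖x‖ - j r₀ / 2) * 2) :=
            ENNReal.ofReal_le_ofReal (by nlinarith [hh])
        _ = ENNReal.ofReal (‖x‖ ^ 2 * (j ‖x‖ - j r₀ / 2)) * 2 := by
            rw [ENNReal.ofReal_mul' (by norm_num : (0:ℝ) ≤ 2)]
            norm_num
  · -- m2Flat ≤ m2
    refine lintegral_mono fun x => ENNReal.ofReal_le_ofReal ?_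
    have : j ‖x‖ - j r₀ / 2 ≤ j ‖x‖ := by linarith
    nlinarith [sq_nonneg ‖x‖]
  · intro cj hcj hdbl
    set E := EuclideanSpace ℝ (Fin d)
    set V := volume (ball (0 : E) r₀) with hV
    have hVfin : V ≠ ⊤ := measure_ball_lt_top.ne
    have hj2 : 0 ≤ j (2 * r₀) := hnonneg _ (by linarith)
    have hpow : (1 : ℝ) < (2 : ℝ) ^ d := one_lt_pow₀ (by norm_num) (by omega)
    have hP : (0 : ℝ) < (2 : ℝ) ^ d - 1 := by linarith
    set K : ℝ := ((2 : ℝ) ^ d - 1) * cj with hK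
    have hKpos : 0 < K := mul_pos (by linarith) hcj
    -- volume of the big ball
    have hball2 : volume (ball (0 : E) (2 * r₀)) = (2 : ℝ≥0∞) ^ d * V := by
      rw [hV, Measure.addHaar_ball volume _ (by linarith : (0:ℝ) ≤ 2 * r₀),
        Measure.addHaar_ball volume _ hr₀.le, finrank_euclideanSpace_fin,
        mul_pow, ← mul_assoc]
      congr 1
      rw [ENNReal.ofReal_mul (by positivity), ENNReal.ofReal_pow (by norm_num)]
      simp
    -- lower bound on the tail
    have hann : ball (0 : E) (2 * r₀) \ ball 0 r₀ ⊆ (ball (0 : E) r₀)ᶜ :=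
      fun x hx => hx.2
    have hannvol : volume (ball (0 : E) (2 * r₀) \ ball 0 r₀)
        = ((2 : ℝ≥0∞) ^ d - 1) * V := by
      rw [measure_diff (ball_subset_ball (by linarith)) measurableSet_ball.nullMeasurableSet
        hVfin, hball2, ENNReal.sub_mul (fun _ _ => hVfin), one_mul]
    have hlow : ENNReal.ofReal (j (2 * r₀)) * (((2 : ℝ≥0∞) ^ d - 1) * V)
        ≤ tailLam d j r₀ := by
      rw [← hannvol, ← setLIntegral_const]
      refine le_trans ?_ (lintegral_mono_set hann)
      refine setLIntegral_mono' (measurableSet_ball.diff measurableSet_ball) fun x hx => ?_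
      have hx1 : ‖x‖ < 2 * r₀ := mem_ball_zero_iff.mp hx.1
      have hx2 : r₀ ≤ ‖x‖ := le_of_not_gt (fun h => hx.2 (mem_ball_zero_iff.mpr h))
      exact ENNReal.ofReal_le_ofReal
        (hmono (lt_of_lt_of_le hr₀ hx2) (by simp; linarith) hx1.le)
    -- convert the ENNReal 2^d - 1 to ofReal
    have hconv : ((2 : ℝ≥0∞) ^ d - 1) = ENNReal.ofReal ((2 : ℝ) ^ d - 1) := by
      rw [ENNReal.ofReal_sub _ (by norm_num), ENNReal.ofReal_pow (by norm_num)]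
      simp
    have hkey : ENNReal.ofReal (j r₀ / 2) * V
        ≤ ENNReal.ofReal (1 / (2 * K)) * tailLam d j r₀ := by
      calc ENNReal.ofReal (j r₀ / 2) * V
          ≤ ENNReal.ofReal (1 / (2 * K) * (j (2 * r₀) * ((2:ℝ) ^ d - 1))) * V := by
            refine mul_le_mul_left (ENNReal.ofReal_le_ofReal ?_) V
            have h1 : cj * j r₀ ≤ j (2 * r₀) := hdbl r₀ hr₀
            rw [hK, one_div, ← div_eq_inv_mul,
              div_le_div_iff₀ (by norm_num) (by positivity)]
            nlinarith [mul_le_mul_of_nonneg_left h1 hP.le]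
        _ = ENNReal.ofReal (1 / (2 * K)) *
              (ENNReal.ofReal (j (2 * r₀)) * (((2 : ℝ≥0∞) ^ d - 1) * V)) := by
            rw [hconv, ENNReal.ofReal_mul (one_div_nonneg.mpr (by linarith)),
              ENNReal.ofReal_mul hj2]
            ring
        _ ≤ ENNReal.ofReal (1 / (2 * K)) * tailLam d j r₀ :=
            mul_le_mul_right hlow _
    calc lamFlat d j r₀ = tailLam d j r₀ + ENNReal.ofReal (j r₀ / 2) * V := rfl
      _ ≤ tailLam d j r₀ + ENNReal.ofReal (1 / (2 * K)) * tailLam d j r₀ :=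
          add_le_add_right hkey _
      _ = ENNReal.ofReal (1 + 1 / (2 * ((2 : ℝ) ^ d - 1) * cj)) * tailLam d j r₀ := by
          rw [ENNReal.ofReal_add (by norm_num)
              (le_of_lt (one_div_pos.mpr (by nlinarith))), add_mul,
            ENNReal.ofReal_one, one_mul, hK, mul_assoc]
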